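/- For every integer r ≥ 2 there exists a finite simple graph SelGadget_r with 2r distinguished vertices v₁,…,v_r and v̄₁,…,v̄_r such that: (1) SelGadget_r has exactly two triangle packings of size 3r, denoted P₀ and P₁; (2) P₀ covers all of v₁,…,v_r and none of v̄₁,…,v̄_r; (3) P₁ covers all of v̄₁,…,v̄_r and none of v₁,…,v_r; (4) SelGadget_r has no triangle packing of size greater than 3r. -/

import Mathlib

/-- `P` is a triangle packing of `G`: a collection of pairwise vertex-disjoint
triangles, each triangle being given by its set of three pairwise adjacent vertices. -/
def IsTrianglePacking {n : ℕ} (G : SimpleGraph (Fin n)) (P : Finset (Finset (Fin n))) :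
    Prop :=
  (∀ t ∈ P, t.card = 3 ∧ ∀ x ∈ t, ∀ y ∈ t, x ≠ y → G.Adj x y) ∧
    ∀ t ∈ P, ∀ s ∈ P, t ≠ s → Disjoint t s

/-- The packing `P` covers the vertex `x`. -/
def Covers {n : ℕ} (P : Finset (Finset (Fin n))) (x : Fin n) : Prop := ∃ t ∈ P, x ∈ t

namespace SelAux

variable {m : ℕ}

/-- cyclic successor on `Fin m` -/
def nxt (j : Fin m) : Fin m :=
  if h : j.val + 1 < m then ⟨j.val + 1, h⟩ else ⟨0, j.pos⟩

lemma nxt_val (j : Fin m) :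
    ((nxt j).val = j.val + 1) ∨ (j.val + 1 = m ∧ (nxt j).val = 0) := by
  unfold nxt; split
  · left; rfl
  · right; exact ⟨by have := j.isLt; omega, rfl⟩

/-- shared ("spine") vertices -/
def vs (j : Fin m) : Fin (m + m) := ⟨j.val, by have := j.isLt; omega⟩

/-- private vertices -/
def vp (j : Fin m) : Fin (m + m) := ⟨m + j.val, by have := j.isLt; omega⟩

@[simp] lemma vs_val (j : Fin m) : (vs j).val = j.val := rfl
@[simp] lemma vp_val (j : Fin m) : (vp j).val = m + j.val := rfl

/-- the `j`-th triangle -/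
def tri (j : Fin m) : Finset (Fin (m + m)) := {vs j, vs (nxt j), vp j}

lemma mem_tri_val {x : Fin (m + m)} {j : Fin m} :
    x ∈ tri j ↔ (x.val = j.val ∨ x.val = (nxt j).val ∨ x.val = m + j.val) := by
  simp [tri, Fin.ext_iff, vs_val, vp_val]

def adj (x y : Fin (m + m)) : Prop := x ≠ y ∧ ∃ j : Fin m, x ∈ tri j ∧ y ∈ tri j

/-- the selection gadget graph -/
def G (m : ℕ) : SimpleGraph (Fin (m + m)) where
  Adj := adj
  symm := ⟨fun x y ⟨h, j, hx, hy⟩ => ⟨h.symm, j, hy, hx⟩⟩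
  loopless := ⟨fun x ⟨h, _⟩ => h rfl⟩

lemma adj_vs_vs {a b : Fin m} (h : adj (vs a) (vs b)) :
    b = nxt a ∨ a = nxt b := by
  obtain ⟨hne, j, hx, hy⟩ := h
  rw [mem_tri_val] at hx hy
  have ha := a.isLt; have hb := b.isLt; have hj := j.isLt
  have hja := nxt_val j; have hna := nxt_val a; have hnb := nxt_val b
  have hne' : a.val ≠ b.val := fun e => hne (by simp [vs, Fin.ext_iff, e])
  rw [Fin.ext_iff, Fin.ext_iff]
  simp only [vs_val] at hx hy
  omega

lemma adj_vs_vp {a i : Fin m} (h : adj (vs a) (vp i)) :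
    a = i ∨ a = nxt i := by
  obtain ⟨hne, j, hx, hy⟩ := h
  rw [mem_tri_val] at hx hy
  have ha := a.isLt; have hb := i.isLt; have hj := j.isLt
  have hja := nxt_val j
  have hni := nxt_val i
  rw [Fin.ext_iff, Fin.ext_iff]
  simp only [vs_val, vp_val] at hx hy
  omega

lemma not_adj_vp_vp {a b : Fin m} (h : adj (vp a) (vp b)) : False := by
  obtain ⟨hne, j, hx, hy⟩ := h
  rw [mem_tri_val] at hx hy
  have ha := a.isLt; have hb := b.isLt; have hj := j.isLt
  have hja := nxt_val j
  have hne' : a.val ≠ b.val := fun e => hne (by simp [vp, Fin.ext_iff, e])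
  simp only [vp_val] at hx hy
  omega

lemma decode (x : Fin (m + m)) : (∃ j : Fin m, x = vs j) ∨ (∃ j : Fin m, x = vp j) := by
  have hx := x.isLt
  by_cases h : x.val < m
  · exact Or.inl ⟨⟨x.val, h⟩, by simp [vs, Fin.ext_iff]⟩
  · exact Or.inr ⟨⟨x.val - m, by omega⟩, by simp [vp, Fin.ext_iff]; omega⟩


lemma nxt_ne (hm : 2 ≤ m) (j : Fin m) : j ≠ nxt j := by
  have := nxt_val j; have := j.isLt
  intro h; rw [Fin.ext_iff] at h; omega

lemma tri_card (hm : 2 ≤ m) (j : Fin m) : (tri j).card = 3 := by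
  have h1 : (vs j : Fin (m+m)) ≠ vs (nxt j) := by
    have := nxt_val j; have := j.isLt
    intro h; rw [Fin.ext_iff] at h; simp only [vs_val] at h; omega
  have h2 : (vs j : Fin (m+m)) ≠ vp j := by
    have := j.isLt
    intro h; rw [Fin.ext_iff] at h; simp only [vs_val, vp_val] at h; omega
  have h3 : (vs (nxt j) : Fin (m+m)) ≠ vp j := by
    have := (nxt j).isLt
    intro h; rw [Fin.ext_iff] at h; simp only [vs_val, vp_val] at h; omega
  simp [tri, Finset.card_insert_of_notMem, h1, h2, h3]

lemma tri_inj {i j : Fin m} (h : tri i = tri j) : i = j := by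
  have h1 : (vp i : Fin (m+m)) ∈ tri j := by
    rw [← h, mem_tri_val]; tauto
  rw [mem_tri_val] at h1
  have := i.isLt; have := j.isLt; have := (nxt j).isLt
  rw [Fin.ext_iff]; simp only [vp_val] at h1; omega

lemma tri_disjoint {i j : Fin m} (hij : i ≠ j) (h1 : j ≠ nxt i) (h2 : i ≠ nxt j) :
    Disjoint (tri i) (tri j) := by
  rw [Finset.disjoint_left]
  intro x hx hx'
  rw [mem_tri_val] at hx hx'
  have := i.isLt; have := j.isLt
  have hni := nxt_val i; have hnj := nxt_val j
  simp only [Ne, Fin.ext_iff] at hij h1 h2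
  omega

lemma disjoint_nxt {i j : Fin m} (h : Disjoint (tri i) (tri j)) : j ≠ nxt i := by
  intro e
  have h1 : (vs (nxt i) : Fin (m+m)) ∈ tri i := by rw [mem_tri_val]; simp
  have h2 : (vs (nxt i) : Fin (m+m)) ∈ tri j := by rw [mem_tri_val, e]; simp
  exact Finset.disjoint_left.1 h h1 h2

/-- every clique of size 3 in the gadget is one of the `tri j` -/
lemma clique_eq_tri (hm : 12 ≤ m) {t : Finset (Fin (m + m))} (h3 : t.card = 3)
    (hadj : ∀ x ∈ t, ∀ y ∈ t, x ≠ y → adj x y) : ∃ j, t = tri j := by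
  obtain ⟨x, y, z, hxy, hxz, hyz, ht⟩ := Finset.card_eq_three.1 h3
  have hx : x ∈ t := by rw [ht]; simp
  have hy : y ∈ t := by rw [ht]; simp
  have hz : z ∈ t := by rw [ht]; simp
  have axy := hadj x hx y hy hxy
  have axz := hadj x hx z hz hxz
  have ayz := hadj y hy z hz hyz
  -- helper to finish the one-private-vertex case
  have finish : ∀ a b i : Fin m, t = {vs a, vs b, vp i} → a ≠ b →
      (a = i ∨ a = nxt i) → (b = i ∨ b = nxt i) → ∃ j, t = tri j := by
    intro a b i het hab ha hb
    refine ⟨i, ?_⟩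
    rcases ha with ha | ha <;> rcases hb with hb | hb
    · exact absurd (ha.trans hb.symm) hab
    · rw [het, ha, hb]; rfl
    · rw [het, ha, hb]; ext w; simp [tri]; tauto
    · exact absurd (ha.trans hb.symm) hab
  -- no triangle among spine vertices
  have nos : ∀ a b c : Fin m, a ≠ b → a ≠ c → b ≠ c →
      adj (vs a) (vs b) → adj (vs a) (vs c) → adj (vs b) (vs c) → False := by
    intro a b c hab hac hbc h1 h2 h3
    have e1 := adj_vs_vs h1
    have e2 := adj_vs_vs h2
    have e3 := adj_vs_vs h3
    have na := nxt_val a; have nb := nxt_val b; have nc := nxt_val c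
    have := a.isLt; have := b.isLt; have := c.isLt
    rw [Fin.ext_iff, Fin.ext_iff] at e1 e2 e3
    simp only [Ne, Fin.ext_iff] at hab hac hbc
    omega
  have vsne : ∀ a b : Fin m, vs (m := m) a ≠ vs b → a ≠ b :=
    fun a b h e => h (by rw [e])
  have vpvs : ∀ a b : Fin m, vp (m := m) a ≠ vs b := by
    intro a b h; rw [Fin.ext_iff] at h; simp only [vs_val, vp_val] at h
    have := b.isLt; omega
  rcases decode x with ⟨a, rfl⟩ | ⟨a, rfl⟩ <;>
    rcases decode y with ⟨b, rfl⟩ | ⟨b, rfl⟩ <;>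
      rcases decode z with ⟨c, rfl⟩ | ⟨c, rfl⟩
  · exact absurd (nos a b c (vsne _ _ hxy) (vsne _ _ hxz) (vsne _ _ hyz) axy axz ayz) not_false
  · -- x = vs a, y = vs b, z = vp c
    exact finish a b c ht (vsne _ _ hxy) (adj_vs_vp axz) (adj_vs_vp ayz)
  · -- x = vs a, y = vp b, z = vs c
    refine finish a c b ?_ (vsne _ _ hxz) (adj_vs_vp axy) (adj_vs_vp ⟨(Ne.symm hyz), ayz.2.imp (fun j hj => ⟨hj.2, hj.1⟩)⟩)
    rw [ht]; ext w; simp [Finset.mem_insert]; tauto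
  · exact absurd ayz not_adj_vp_vp
  · -- x = vp a, y = vs b, z = vs c
    refine finish b c a ?_ (vsne _ _ hyz)
      (adj_vs_vp ⟨(Ne.symm hxy), axy.2.imp (fun j hj => ⟨hj.2, hj.1⟩)⟩)
      (adj_vs_vp ⟨(Ne.symm hxz), axz.2.imp (fun j hj => ⟨hj.2, hj.1⟩)⟩)
    rw [ht]; ext w; simp [Finset.mem_insert]; tauto
  · exact absurd axz not_adj_vp_vp
  · exact absurd axy not_adj_vp_vp
  · exact absurd axy not_adj_vp_vp


/-! ### independent sets in the cycle -/

def EvS (m : ℕ) : Finset (Fin m) := Finset.univ.filter (fun j => j.val % 2 = 0)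
def OdS (m : ℕ) : Finset (Fin m) := Finset.univ.filter (fun j => j.val % 2 = 1)

lemma card_EvS {c : ℕ} : (EvS (2 * c)).card = c := by
  suffices h : (EvS (2 * c)).card = (Finset.univ : Finset (Fin c)).card by simpa using h
  refine Finset.card_bij' (fun (a : Fin (2*c)) (_ : a ∈ EvS (2*c)) =>
      (⟨a.val / 2, by have := a.isLt; omega⟩ : Fin c))
    (fun (b : Fin c) (_ : b ∈ Finset.univ) =>
      (⟨2 * b.val, by have := b.isLt; omega⟩ : Fin (2*c)))
    (fun a _ => Finset.mem_univ _) ?_ ?_ ?_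
  · intro b _; simp [EvS, Nat.mul_mod_right]
  · intro a ha
    have h2 : a.val % 2 = 0 := (Finset.mem_filter.1 ha).2
    apply Fin.ext; show 2 * (a.val / 2) = a.val; omega
  · intro b _; apply Fin.ext; show (2 * b.val) / 2 = b.val; omega

lemma card_OdS {c : ℕ} : (OdS (2 * c)).card = c := by
  suffices h : (OdS (2 * c)).card = (Finset.univ : Finset (Fin c)).card by simpa using h
  refine Finset.card_bij' (fun (a : Fin (2*c)) (_ : a ∈ OdS (2*c)) =>
      (⟨a.val / 2, by have := a.isLt; omega⟩ : Fin c))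
    (fun (b : Fin c) (_ : b ∈ Finset.univ) =>
      (⟨2 * b.val + 1, by have := b.isLt; omega⟩ : Fin (2*c)))
    (fun a _ => Finset.mem_univ _) ?_ ?_ ?_
  · intro b _
    simp only [OdS, Finset.mem_filter, Finset.mem_univ, true_and]
    omega
  · intro a ha
    have h2 : a.val % 2 = 1 := (Finset.mem_filter.1 ha).2
    apply Fin.ext; show 2 * (a.val / 2) + 1 = a.val; omega
  · intro b _; apply Fin.ext; show (2 * b.val + 1) / 2 = b.val; omega

lemma nxt_iterate_val {c : ℕ} (hc : 2 ≤ c) (x : Fin c) (d : ℕ) :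
    ((nxt)^[d] x).val = (x.val + d) % c := by
  induction d with
  | zero => simp [Nat.mod_eq_of_lt x.isLt]
  | succ d ih =>
    rw [Function.iterate_succ_apply']
    have hv := nxt_val ((nxt)^[d] x)
    have hlt := ((nxt)^[d] x).isLt
    have h1 : (x.val + (d + 1)) % c = ((x.val + d) % c + 1) % c := by
      rw [← Nat.add_assoc, Nat.add_mod (x.val + d) 1 c, Nat.mod_eq_of_lt (show 1 < c by omega)]
    rcases hv with hv | ⟨hv1, hv2⟩
    · have hlt2 := (nxt ((nxt)^[d] x)).isLt
      rw [hv, ih] at hlt2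
      rw [hv, ih, h1]
      exact (Nat.mod_eq_of_lt hlt2).symm
    · rw [hv2, h1, ← ih, hv1, Nat.mod_self]

lemma reach {c : ℕ} (hc : 2 ≤ c) {P : Fin c → Prop} (step : ∀ i, P i → P (nxt i))
    {i0 : Fin c} (h0 : P i0) (j : Fin c) : P j := by
  have key : ∀ d, P ((nxt)^[d] i0) := by
    intro d; induction d with
    | zero => exact h0
    | succ d ih => rw [Function.iterate_succ_apply']; exact step _ ih
  have hj : (nxt)^[j.val + c - i0.val] i0 = j := by
    apply Fin.ext
    rw [nxt_iterate_val hc]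
    have h2 : i0.val + (j.val + c - i0.val) = j.val + c := by have := i0.isLt; omega
    rw [h2, Nat.add_mod_right, Nat.mod_eq_of_lt j.isLt]
  rw [← hj]; exact key _

lemma indep_card_le {c : ℕ} {S : Finset (Fin (2 * c))}
    (hind : ∀ j ∈ S, nxt j ∉ S) : S.card ≤ c := by
  classical
  have hf : ∀ x ∈ S, (⟨x.val / 2, by have := x.isLt; omega⟩ : Fin c) ∈ Finset.univ :=
    fun x _ => Finset.mem_univ _
  rw [Finset.card_eq_sum_card_fiberwise hf]
  have fiber_le : ∀ i : Fin c,
      (S.filter (fun j => (⟨j.val / 2, by have := j.isLt; omega⟩ : Fin c) = i)).card ≤ 1 := by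
    intro i
    rw [Finset.card_le_one]
    intro j hj k hk
    rw [Finset.mem_filter] at hj hk
    by_contra hne
    have hji : j.val / 2 = i.val := congrArg Fin.val hj.2
    have hki : k.val / 2 = i.val := congrArg Fin.val hk.2
    have hne' : j.val ≠ k.val := fun e => hne (Fin.ext e)
    have hnj := nxt_val j; have hnk := nxt_val k
    have := j.isLt; have := k.isLt
    have hor : k = nxt j ∨ j = nxt k := by
      rw [Fin.ext_iff, Fin.ext_iff]; omega
    rcases hor with h | h
    · exact hind j hj.1 (h ▸ hk.1)
    · exact hind k hk.1 (h ▸ hj.1)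
  calc ∑ i : Fin c, (S.filter _).card ≤ ∑ _i : Fin c, 1 :=
        Finset.sum_le_sum (fun i _ => fiber_le i)
    _ = c := by simp

lemma indep_eq {c : ℕ} (hc : 2 ≤ c) {S : Finset (Fin (2 * c))}
    (hind : ∀ j ∈ S, nxt j ∉ S) (hcard : S.card = c) :
    S = EvS (2 * c) ∨ S = OdS (2 * c) := by
  classical
  let f : Fin (2 * c) → Fin c := fun j => ⟨j.val / 2, by have := j.isLt; omega⟩
  have hfval : ∀ x : Fin (2 * c), (f x).val = x.val / 2 := fun _ => rfl
  have fiber_le : ∀ i : Fin c, (S.filter (fun j => f j = i)).card ≤ 1 := by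
    intro i
    rw [Finset.card_le_one]
    intro j hj k hk
    rw [Finset.mem_filter] at hj hk
    by_contra hne
    have hji : j.val / 2 = i.val := congrArg Fin.val hj.2
    have hki : k.val / 2 = i.val := congrArg Fin.val hk.2
    have hne' : j.val ≠ k.val := fun e => hne (Fin.ext e)
    have hnj := nxt_val j; have hnk := nxt_val k
    have := j.isLt; have := k.isLt
    have hor : k = nxt j ∨ j = nxt k := by
      rw [Fin.ext_iff, Fin.ext_iff]; omega
    rcases hor with h | h
    · exact hind j hj.1 (h ▸ hk.1)
    · exact hind k hk.1 (h ▸ hj.1)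
  have hsum : ∑ i : Fin c, (S.filter (fun j => f j = i)).card = c := by
    rw [← Finset.card_eq_sum_card_fiberwise (fun x (_ : x ∈ S) => Finset.mem_univ (f x))]
    exact hcard
  have fiber_eq : ∀ i : Fin c, (S.filter (fun j => f j = i)).card = 1 := by
    by_contra hno
    push_neg at hno
    obtain ⟨i0, hi0⟩ := hno
    have hlt : (S.filter (fun j => f j = i0)).card < 1 := lt_of_le_of_ne (fiber_le i0) hi0
    have hstrict := Finset.sum_lt_sum (fun i (_ : i ∈ Finset.univ) => fiber_le i)
      ⟨i0, Finset.mem_univ _, hlt⟩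
    rw [hsum] at hstrict
    simp at hstrict
  choose pick hpick using fun i => Finset.card_eq_one.1 (fiber_eq i)
  have pick_mem : ∀ i, pick i ∈ S := by
    intro i
    have h := Finset.mem_singleton_self (pick i)
    rw [← hpick i, Finset.mem_filter] at h
    exact h.1
  have pick_f : ∀ i, f (pick i) = i := by
    intro i
    have h := Finset.mem_singleton_self (pick i)
    rw [← hpick i, Finset.mem_filter] at h
    exact h.2
  have pick_unique : ∀ j ∈ S, j = pick (f j) := by
    intro j hj
    have h : j ∈ S.filter (fun k => f k = f j) := Finset.mem_filter.2 ⟨hj, rfl⟩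
    rw [hpick (f j), Finset.mem_singleton] at h
    exact h
  have step : ∀ i : Fin c, (pick i).val % 2 = 1 → (pick (nxt i)).val % 2 = 1 := by
    intro i hodd
    by_contra heven
    have hfa : (pick i).val / 2 = i.val := congrArg Fin.val (pick_f i)
    have hfb : (pick (nxt i)).val / 2 = (nxt i).val := congrArg Fin.val (pick_f (nxt i))
    have ha := nxt_val (pick i); have hb := nxt_val i
    have h1 := (pick i).isLt; have h2 := (pick (nxt i)).isLt
    have h3 := i.isLt; have h4 := (nxt i).isLt
    have h5 := (nxt (pick i)).isLt
    have heq : nxt (pick i) = pick (nxt i) := by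
      apply Fin.ext; omega
    exact hind (pick i) (pick_mem i) (heq ▸ pick_mem (nxt i))
  by_cases hod : ∃ i0, (pick i0).val % 2 = 1
  · right
    obtain ⟨i0, h0⟩ := hod
    have hall : ∀ i, (pick i).val % 2 = 1 := reach hc step h0
    apply Finset.ext; intro j
    simp only [OdS, Finset.mem_filter, Finset.mem_univ, true_and]
    constructor
    · intro hj; rw [pick_unique j hj]; exact hall _
    · intro hj
      have hp : (pick (f j)).val / 2 = j.val / 2 := congrArg Fin.val (pick_f (f j))
      have ho := hall (f j)
      have : j = pick (f j) := Fin.ext (by omega)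
      rw [this]; exact pick_mem _
  · left
    push_neg at hod
    have hall : ∀ i, (pick i).val % 2 = 0 := by
      intro i; have := hod i; omega
    apply Finset.ext; intro j
    simp only [EvS, Finset.mem_filter, Finset.mem_univ, true_and]
    constructor
    · intro hj; rw [pick_unique j hj]; exact hall _
    · intro hj
      have hp : (pick (f j)).val / 2 = j.val / 2 := congrArg Fin.val (pick_f (f j))
      have ho := hall (f j)
      have : j = pick (f j) := Fin.ext (by omega)
      rw [this]; exact pick_mem _


/-! ### packings of the gadget -/

lemma tri_injective : Function.Injective (tri (m := m)) := fun _ _ h => tri_inj h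

def idxS (m : ℕ) (Q : Finset (Finset (Fin (m + m)))) : Finset (Fin m) :=
  Finset.univ.filter (fun j => tri j ∈ Q)

lemma mem_idxS {Q : Finset (Finset (Fin (m + m)))} {j : Fin m} :
    j ∈ idxS m Q ↔ tri j ∈ Q := by simp [idxS]

lemma pack_image (hm : 12 ≤ m) {Q : Finset (Finset (Fin (m + m)))}
    (hQ : IsTrianglePacking (G m) Q) : Q = (idxS m Q).image tri := by
  ext t
  simp only [Finset.mem_image]
  constructor
  · intro ht
    obtain ⟨hc3, hadj⟩ := hQ.1 t ht
    obtain ⟨j, rfl⟩ := clique_eq_tri hm hc3 hadj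
    exact ⟨j, mem_idxS.2 ht, rfl⟩
  · rintro ⟨j, hj, rfl⟩; exact mem_idxS.1 hj

lemma pack_card (hm : 12 ≤ m) {Q : Finset (Finset (Fin (m + m)))}
    (hQ : IsTrianglePacking (G m) Q) : Q.card = (idxS m Q).card := by
  conv_lhs => rw [pack_image hm hQ]
  exact Finset.card_image_of_injective _ tri_injective

lemma pack_indep (hm : 12 ≤ m) {Q : Finset (Finset (Fin (m + m)))}
    (hQ : IsTrianglePacking (G m) Q) : ∀ j ∈ idxS m Q, nxt j ∉ idxS m Q := by
  intro j hj hnj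
  rw [mem_idxS] at hj hnj
  have hne : tri j ≠ tri (nxt j) := fun e => nxt_ne (by omega) j (tri_inj e)
  have hd := hQ.2 _ hj _ hnj hne
  have h1 : (vs (nxt j) : Fin (m+m)) ∈ tri j := by rw [mem_tri_val]; simp
  have h2 : (vs (nxt j) : Fin (m+m)) ∈ tri (nxt j) := by rw [mem_tri_val]; simp
  exact Finset.disjoint_left.1 hd h1 h2

lemma pack_of_parity (hm : 12 ≤ m) (hme : m % 2 = 0) {A : Finset (Fin m)}
    (hpar : ∀ j ∈ A, ∀ k ∈ A, j.val % 2 = k.val % 2) :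
    IsTrianglePacking (G m) (A.image tri) := by
  constructor
  · intro t ht
    obtain ⟨j, _, rfl⟩ := Finset.mem_image.1 ht
    exact ⟨tri_card (by omega) j, fun x hx y hy hxy => ⟨hxy, j, hx, hy⟩⟩
  · intro t ht s hs hne
    obtain ⟨i, hi, rfl⟩ := Finset.mem_image.1 ht
    obtain ⟨j, hj, rfl⟩ := Finset.mem_image.1 hs
    have hij : i ≠ j := fun e => hne (by rw [e])
    have hp := hpar i hi j hj
    have hi' := i.isLt; have hj' := j.isLt
    have hni := nxt_val i; have hnj := nxt_val j
    apply tri_disjoint hij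
    · intro e
      have := congrArg Fin.val e
      omega
    · intro e
      have := congrArg Fin.val e
      omega

end SelAux

open SelAux in
/-- For every `r ≥ 2` there is a finite simple graph (SelGadget_r) with `2r`
distinguished vertices `v₁,…,v_r, v̄₁,…,v̄_r` such that it has exactly two triangle
packings `P₀, P₁` of size `3r`, `P₀` covers all `v_i` and no `v̄_i`, `P₁` covers all
`v̄_i` and no `v_i`, and it has no triangle packing of size greater than `3r`. -/
theorem exists_selector_gadget (r : ℕ) (hr : 2 ≤ r) :
    ∃ (n : ℕ) (G : SimpleGraph (Fin n)) (d : Fin r ⊕ Fin r → Fin n),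
      Function.Injective d ∧
      ∃ P₀ P₁ : Finset (Finset (Fin n)),
        P₀ ≠ P₁ ∧
        IsTrianglePacking G P₀ ∧ IsTrianglePacking G P₁ ∧
        P₀.card = 3 * r ∧ P₁.card = 3 * r ∧
        (∀ Q : Finset (Finset (Fin n)), IsTrianglePacking G Q → Q.card = 3 * r →
          Q = P₀ ∨ Q = P₁) ∧
        (∀ i : Fin r, Covers P₀ (d (Sum.inl i))) ∧
        (∀ i : Fin r, ¬ Covers P₀ (d (Sum.inr i))) ∧
        (∀ i : Fin r, Covers P₁ (d (Sum.inr i))) ∧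
        (∀ i : Fin r, ¬ Covers P₁ (d (Sum.inl i))) ∧
        (∀ Q : Finset (Finset (Fin n)), IsTrianglePacking G Q → Q.card ≤ 3 * r) := by
  classical
  have hm : 12 ≤ 2 * (3 * r) := by omega
  have hme : (2 * (3 * r)) % 2 = 0 := by omega
  have hc2 : 2 ≤ 3 * r := by omega
  refine ⟨2 * (3 * r) + 2 * (3 * r), G (2 * (3 * r)),
    fun z => Sum.elim
      (fun i : Fin r => vp ⟨2 * i.val, by have := i.isLt; omega⟩)
      (fun i : Fin r => vp ⟨2 * i.val + 1, by have := i.isLt; omega⟩) z, ?_, ?_⟩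
  · -- injectivity of d
    intro a b h
    cases a with
    | inl i => cases b with
      | inl j =>
        have := congrArg Fin.val h
        simp only [Sum.elim_inl, vp_val] at this
        have : i = j := Fin.ext (by omega)
        rw [this]
      | inr j =>
        have := congrArg Fin.val h
        simp only [Sum.elim_inl, Sum.elim_inr, vp_val] at this
        omega
    | inr i => cases b with
      | inl j =>
        have := congrArg Fin.val h
        simp only [Sum.elim_inl, Sum.elim_inr, vp_val] at this
        omega
      | inr j =>
        have := congrArg Fin.val h
        simp only [Sum.elim_inr, vp_val] at this
        have : i = j := Fin.ext (by omega)
        rw [this]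
  refine ⟨(EvS (2 * (3 * r))).image tri, (OdS (2 * (3 * r))).image tri, ?_, ?_, ?_, ?_, ?_, ?_, ?_, ?_, ?_, ?_, ?_⟩
  · -- P₀ ≠ P₁
    intro h
    have h0 : (⟨0, by omega⟩ : Fin (2 * (3 * r))) ∈ EvS (2 * (3 * r)) := by
      simp [EvS]
    have h1 : tri (⟨0, by omega⟩ : Fin (2 * (3 * r))) ∈ (EvS (2 * (3 * r))).image tri :=
      Finset.mem_image_of_mem _ h0
    rw [h] at h1
    obtain ⟨k, hk, he⟩ := Finset.mem_image.1 h1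
    have hk1 : k.val % 2 = 1 := (Finset.mem_filter.1 hk).2
    have := congrArg Fin.val (tri_inj he)
    simp at this
    omega
  · -- P₀ packing
    apply pack_of_parity hm hme
    intro j hj k hk
    have h1 : j.val % 2 = 0 := (Finset.mem_filter.1 hj).2
    have h2 : k.val % 2 = 0 := (Finset.mem_filter.1 hk).2
    omega
  · -- P₁ packing
    apply pack_of_parity hm hme
    intro j hj k hk
    have h1 : j.val % 2 = 1 := (Finset.mem_filter.1 hj).2
    have h2 : k.val % 2 = 1 := (Finset.mem_filter.1 hk).2
    omega
  · -- card P₀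
    rw [Finset.card_image_of_injective _ tri_injective]
    exact card_EvS
  · -- card P₁
    rw [Finset.card_image_of_injective _ tri_injective]
    exact card_OdS
  · -- uniqueness
    intro Q hQ hcard
    have h1 := pack_image hm hQ
    have h2 := pack_card hm hQ
    have h3 := pack_indep hm hQ
    have h4 : (idxS (2 * (3 * r)) Q).card = 3 * r := by omega
    rcases indep_eq hc2 h3 h4 with h | h
    · left; rw [h1, h]
    · right; rw [h1, h]
  · -- P₀ covers v_i
    intro i
    refine ⟨tri ⟨2 * i.val, by have := i.isLt; omega⟩, ?_, ?_⟩
    · apply Finset.mem_image_of_mem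
      simp only [EvS, Finset.mem_filter, Finset.mem_univ, true_and]
      omega
    · rw [mem_tri_val]; simp
  · -- P₀ does not cover v̄_i
    rintro i ⟨t, ht, hmem⟩
    obtain ⟨j, hj, rfl⟩ := Finset.mem_image.1 ht
    have h1 : j.val % 2 = 0 := (Finset.mem_filter.1 hj).2
    rw [mem_tri_val] at hmem
    simp only [Sum.elim_inr, vp_val] at hmem
    have := j.isLt; have := (nxt j).isLt
    omega
  · -- P₁ covers v̄_i
    intro i
    refine ⟨tri ⟨2 * i.val + 1, by have := i.isLt; omega⟩, ?_, ?_⟩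
    · apply Finset.mem_image_of_mem
      simp only [OdS, Finset.mem_filter, Finset.mem_univ, true_and]
      omega
    · rw [mem_tri_val]; simp
  · -- P₁ does not cover v_i
    rintro i ⟨t, ht, hmem⟩
    obtain ⟨j, hj, rfl⟩ := Finset.mem_image.1 ht
    have h1 : j.val % 2 = 1 := (Finset.mem_filter.1 hj).2
    rw [mem_tri_val] at hmem
    simp only [Sum.elim_inl, vp_val] at hmem
    have := j.isLt; have := (nxt j).isLt
    omega
  · -- global bound
    intro Q hQ
    rw [pack_card hm hQ]
    exact indep_card_le (pack_indep hm hQ)
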